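/- Let Ω ⊆ ℂ^{n+1} be open, let ν > 0 and N > 0 be real, let ρ : Ω → ℝ be C² with ρ + ν > 0 on Ω, let ψ : Ω → ℝ be a C² pluriharmonic function, and let f^1,…,f^K : Ω → ℂ be holomorphic with (ρ + ν)^N = ψ + ∑_{μ=1}^K |f^μ|² on Ω. Then for every p ∈ Ω with ρ(p) = 0 and all a, b ∈ ℂ^{n+1}: N·ν^{N−2}·(ν·H^ρ_p(a,b) + (N−1)·∂ρ_p(a)·conj(∂ρ_p(b))) = ∑_{μ=1}^K Df^μ_p(a)·conj(Df^μ_p(b)), where Df^μ_p denotes the complex Fréchet derivative. (This is the second-order differentiated identity — in coordinates, N ν^{N−2}(ν ρ_{jk̄} + (N−1) ρ_j ρ_{k̄}) = ∑_μ f^{(μ)}_j f̄^{(μ)}_{k̄} on M — used in the proof of Theorem 1.1 of the paper.) -/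

import Mathlib

open ComplexConjugate

/-- Wirtinger derivative `∂u_p(a) = (1/2)(Du_p(a) − i·Du_p(i·a))` of a real-valued
function on an open subset of `ℂ^m`, via the real Fréchet derivative. -/
noncomputable def wirtingerDeriv {m : ℕ} (u : (Fin m → ℂ) → ℝ) (p a : Fin m → ℂ) : ℂ :=
  (1 / 2 : ℂ) * (((fderiv ℝ u p a : ℝ) : ℂ) - Complex.I * ((fderiv ℝ u p (Complex.I • a) : ℝ) : ℂ))

/-- Mixed complex Hessian
`H^u_p(a,b) = (1/4)(D²u_p(a,b) + D²u_p(ia,ib)) + (i/4)(D²u_p(a,ib) − D²u_p(ia,b))`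
of a real-valued function, via the second real Fréchet derivative. -/
noncomputable def mixedComplexHessian {m : ℕ} (u : (Fin m → ℂ) → ℝ) (p a b : Fin m → ℂ) : ℂ :=
  (1 / 4 : ℂ) * (((fderiv ℝ (fderiv ℝ u) p a b : ℝ) : ℂ)
      + ((fderiv ℝ (fderiv ℝ u) p (Complex.I • a) (Complex.I • b) : ℝ) : ℂ))
    + (Complex.I / 4) * (((fderiv ℝ (fderiv ℝ u) p a (Complex.I • b) : ℝ) : ℂ)
      - ((fderiv ℝ (fderiv ℝ u) p (Complex.I • a) b : ℝ) : ℂ))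

/-- If `(ρ + ν)^N = ψ + ∑_μ |f^μ|²` on an open `Ω` with `ρ + ν > 0`,
`ρ` C², `ψ` C² and pluriharmonic, and `f^μ` holomorphic, then at every `p ∈ Ω` with
`ρ(p) = 0` and all `a, b`:
`N ν^{N−2}(ν H^ρ_p(a,b) + (N−1) ∂ρ_p(a) conj(∂ρ_p(b))) = ∑_μ Df^μ_p(a)·conj(Df^μ_p(b))`. -/


lemma hasFDerivAt_fderiv_clm_apply {𝕜 : Type*} [NontriviallyNormedField 𝕜] {E F : Type*}
    [NormedAddCommGroup E] [NormedSpace 𝕜 E] [NormedAddCommGroup F] [NormedSpace 𝕜 F]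
    {u : E → F} {p : E} (h : DifferentiableAt 𝕜 (fderiv 𝕜 u) p) (w : E) :
    HasFDerivAt (fun y => fderiv 𝕜 u y w)
      ((ContinuousLinearMap.apply 𝕜 F w).comp (fderiv 𝕜 (fderiv 𝕜 u) p)) p :=
  (ContinuousLinearMap.apply 𝕜 F w).hasFDerivAt.comp p h.hasFDerivAt

lemma second_deriv_congr {E : Type*} [NormedAddCommGroup E] [NormedSpace ℝ E]
    {u φ : E → ℝ} {p : E} {w : E} {L : E →L[ℝ] ℝ}
    (hu : DifferentiableAt ℝ (fderiv ℝ u) p)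
    (hev : (fun y => fderiv ℝ u y w) =ᶠ[nhds p] φ)
    (hφ : HasFDerivAt φ L p) (v : E) :
    fderiv ℝ (fderiv ℝ u) p v w = L v := by
  have h1 : (ContinuousLinearMap.apply ℝ ℝ w).comp (fderiv ℝ (fderiv ℝ u) p) = L := by
    rw [← (hasFDerivAt_fderiv_clm_apply hu w).fderiv, hev.fderiv_eq, hφ.fderiv]
  exact DFunLike.congr_fun h1 v

lemma line_second_deriv {E : Type*} [NormedAddCommGroup E] [NormedSpace ℂ E] {u : E → ℝ} {p : E}
    (hu : ContDiffAt ℝ 2 u p) (a : E) (ζ η : ℂ) :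
    fderiv ℝ (fderiv ℝ (fun z : ℂ => u (p + z • a))) 0 ζ η
      = fderiv ℝ (fderiv ℝ u) p (ζ • a) (η • a) := by
  have h12 : (1 : WithTop ℕ∞) + 1 ≤ 2 := by norm_num
  set A : ℂ →L[ℝ] E := (ContinuousLinearMap.toSpanSingleton ℂ a).restrictScalars ℝ with hA
  have hAap : ∀ z : ℂ, A z = z • a := fun z => rfl
  have hl : ∀ z : ℂ, HasFDerivAt (fun w : ℂ => p + w • a) A z := fun z =>
    A.hasFDerivAt.const_add p
  have h0 : p + (0 : ℂ) • a = p := by simp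
  have haff : ContDiff ℝ 2 (fun z : ℂ => p + z • a) := contDiff_const.add A.contDiff
  have hcomp : ContDiffAt ℝ 2 (fun z : ℂ => u (p + z • a)) 0 := by
    have hu' : ContDiffAt ℝ 2 u ((fun z : ℂ => p + z • a) 0) := by
      simpa [h0] using hu
    exact hu'.comp (0 : ℂ) haff.contDiffAt
  have hfe : DifferentiableAt ℝ (fderiv ℝ (fun z : ℂ => u (p + z • a))) 0 :=
    (hcomp.fderiv_right h12).differentiableAt one_ne_zero
  have hDu : DifferentiableAt ℝ (fderiv ℝ u) p :=
    (hu.fderiv_right h12).differentiableAt one_ne_zero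
  have huev : ∀ᶠ x in nhds p, DifferentiableAt ℝ u x :=
    (hu.eventually (by simp)).mono fun x hx => hx.differentiableAt (by norm_num)
  have hcont : Continuous (fun z : ℂ => p + z • a) := haff.continuous
  have hev : (fun ξ : ℂ => fderiv ℝ (fun z : ℂ => u (p + z • a)) ξ η) =ᶠ[nhds 0]
      fun ξ : ℂ => fderiv ℝ u (p + ξ • a) (η • a) := by
    have htend : Filter.Tendsto (fun z : ℂ => p + z • a) (nhds 0) (nhds p) := by
      have := hcont.tendsto (0 : ℂ); rwa [h0] at this
    filter_upwards [htend.eventually huev] with ξ hξ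
    have hc : HasFDerivAt (fun z : ℂ => u (p + z • a)) ((fderiv ℝ u (p + ξ • a)).comp A) ξ :=
      (hξ.hasFDerivAt.comp ξ (hl ξ))
    rw [hc.fderiv]; rfl
  have hR : HasFDerivAt (fun ξ : ℂ => fderiv ℝ u (p + ξ • a) (η • a))
      ((((ContinuousLinearMap.apply ℝ ℝ (η • a)).comp (fderiv ℝ (fderiv ℝ u) p)).comp A)) 0 := by
    have hg := hasFDerivAt_fderiv_clm_apply hDu (η • a)
    have hg' : HasFDerivAt (fun y => fderiv ℝ u y (η • a))
        ((ContinuousLinearMap.apply ℝ ℝ (η • a)).comp (fderiv ℝ (fderiv ℝ u) p))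
        ((fun z : ℂ => p + z • a) 0) := by simpa [h0] using hg
    exact hg'.comp (0 : ℂ) (hl 0)
  have := second_deriv_congr hfe hev hR ζ
  rw [this]; rfl


lemma contDiff_normSq : ContDiff ℝ 2 Complex.normSq := by
  have h : Complex.normSq = fun z : ℂ => z.re * z.re + z.im * z.im := by
    funext z; simp [Complex.normSq_apply]
  rw [h]
  exact (Complex.reCLM.contDiff.mul Complex.reCLM.contDiff).add
    (Complex.imCLM.contDiff.mul Complex.imCLM.contDiff)

lemma normSq_first_deriv {g : ℂ → ℂ} {z : ℂ} (hg : DifferentiableAt ℂ g z) (v : ℂ) :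
    fderiv ℝ (fun w => Complex.normSq (g w)) z v
      = 2 * (conj (g z) * (deriv g z * v)).re := by
  have hgR : HasFDerivAt g
      (((1 : ℂ →L[ℂ] ℂ).smulRight (deriv g z)).restrictScalars ℝ) z :=
    (hg.hasDerivAt.hasFDerivAt).restrictScalars ℝ
  have hconj : HasFDerivAt (fun w => conj (g w))
      ((Complex.conjCLE.toContinuousLinearMap).comp
        (((1 : ℂ →L[ℂ] ℂ).smulRight (deriv g z)).restrictScalars ℝ)) z :=
    (Complex.conjCLE.toContinuousLinearMap.hasFDerivAt).comp z hgR
  have hmul := hconj.mul hgR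
  have hre := (Complex.reCLM.hasFDerivAt).comp z hmul
  have hfun : (fun w => Complex.normSq (g w)) = fun w => (conj (g w) * g w).re := by
    funext w
    rw [← Complex.normSq_eq_conj_mul_self, Complex.ofReal_re]
  have hre' : HasFDerivAt (fun w => (conj (g w) * g w).re)
      (Complex.reCLM.comp
        (conj (g z) • ((1 : ℂ →L[ℂ] ℂ).smulRight (deriv g z)).restrictScalars ℝ +
          g z • (Complex.conjCLE.toContinuousLinearMap).comp
            (((1 : ℂ →L[ℂ] ℂ).smulRight (deriv g z)).restrictScalars ℝ))) z := hre
  rw [hfun, hre'.fderiv]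
  simp only [ContinuousLinearMap.coe_comp', Function.comp_apply,
    ContinuousLinearMap.add_apply, ContinuousLinearMap.coe_smul', Pi.smul_apply,
    ContinuousLinearMap.coe_restrictScalars', ContinuousLinearMap.smulRight_apply,
    ContinuousLinearMap.one_apply, ContinuousLinearEquiv.coe_coe,
    Complex.reCLM_apply, smul_eq_mul, Complex.conjCLE_apply]
  simp [Complex.mul_re, Complex.mul_im, Complex.conj_re, Complex.conj_im]
  ring

lemma normSq_second_deriv {g : ℂ → ℂ} {s : Set ℂ} (hs : IsOpen s) (h0 : (0:ℂ) ∈ s)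
    (hg : DifferentiableOn ℂ g s) (v w : ℂ) :
    fderiv ℝ (fderiv ℝ (fun z => Complex.normSq (g z))) 0 v w
      = 2 * ((conj (deriv g 0 * v) * (deriv g 0 * w)).re
          + (conj (g 0) * (deriv (deriv g) 0 * v * w)).re) := by
  have h12 : (1 : WithTop ℕ∞) + 1 ≤ 2 := by norm_num
  have hA : AnalyticOnNhd ℂ g s := hg.analyticOnNhd hs
  have hA' : AnalyticOnNhd ℂ (deriv g) s := hA.deriv
  have hgC : ContDiffAt ℝ 2 (fun z => Complex.normSq (g z)) 0 :=
    contDiff_normSq.contDiffAt.comp 0 (((hA 0 h0).contDiffAt).restrict_scalars ℝ)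
  have hu2 : DifferentiableAt ℝ (fderiv ℝ (fun z => Complex.normSq (g z))) 0 :=
    (hgC.fderiv_right h12).differentiableAt one_ne_zero
  have hev : (fun y => fderiv ℝ (fun z => Complex.normSq (g z)) y w) =ᶠ[nhds 0]
      fun y => 2 * (conj (g y) * (deriv g y * w)).re := by
    filter_upwards [hs.mem_nhds h0] with y hy
    exact normSq_first_deriv (hg.differentiableAt (hs.mem_nhds hy)) w
  -- build HasFDerivAt of φ at 0
  have hd1 : DifferentiableAt ℂ g 0 := (hA 0 h0).differentiableAt
  have hd2 : DifferentiableAt ℂ (deriv g) 0 := (hA' 0 h0).differentiableAt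
  have hgR : HasFDerivAt g
      (((1 : ℂ →L[ℂ] ℂ).smulRight (deriv g 0)).restrictScalars ℝ) 0 :=
    (hd1.hasDerivAt.hasFDerivAt).restrictScalars ℝ
  have hconj : HasFDerivAt (fun y => conj (g y))
      ((Complex.conjCLE.toContinuousLinearMap).comp
        (((1 : ℂ →L[ℂ] ℂ).smulRight (deriv g 0)).restrictScalars ℝ)) 0 :=
    (Complex.conjCLE.toContinuousLinearMap.hasFDerivAt).comp 0 hgR
  have hdw : HasFDerivAt (fun y => deriv g y * w)
      (((1 : ℂ →L[ℂ] ℂ).smulRight (deriv (deriv g) 0 * w)).restrictScalars ℝ) 0 := by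
    have := (hd2.hasDerivAt.mul_const w).hasFDerivAt.restrictScalars ℝ
    exact this
  have hmul := hconj.mul hdw
  have hre := (Complex.reCLM.hasFDerivAt).comp 0 hmul
  have hφ := hre.const_mul (2:ℝ)
  rw [second_deriv_congr hu2 hev hφ v]
  simp only [ContinuousLinearMap.coe_comp', Function.comp_apply,
    ContinuousLinearMap.add_apply, ContinuousLinearMap.coe_smul', Pi.smul_apply,
    ContinuousLinearMap.coe_restrictScalars', ContinuousLinearMap.smulRight_apply,
    ContinuousLinearMap.one_apply, ContinuousLinearEquiv.coe_coe,
    Complex.reCLM_apply, smul_eq_mul, Complex.conjCLE_apply]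
  simp [Complex.mul_re, Complex.mul_im, Complex.conj_re, Complex.conj_im]
  ring

lemma rpow_comp_second_deriv {E : Type*} [NormedAddCommGroup E] [NormedSpace ℝ E]
    {ρ : E → ℝ} {Ω : Set E} (hΩ : IsOpen Ω) {p : E} (hp : p ∈ Ω)
    (hρ : ContDiffOn ℝ 2 ρ Ω) {ν N : ℝ} (hρν : ∀ x ∈ Ω, 0 < ρ x + ν) (v w : E) :
    fderiv ℝ (fderiv ℝ (fun x => (ρ x + ν) ^ N)) p v w
      = (N * ((N - 1) * (ρ p + ν) ^ (N - 2))) * (fderiv ℝ ρ p v * fderiv ℝ ρ p w)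
        + (N * (ρ p + ν) ^ (N - 1)) * fderiv ℝ (fderiv ℝ ρ) p v w := by
  have h12 : (1 : WithTop ℕ∞) + 1 ≤ 2 := by norm_num
  have hρd : ∀ x ∈ Ω, DifferentiableAt ℝ ρ x := fun x hx =>
    (hρ.contDiffAt (hΩ.mem_nhds hx)).differentiableAt (by norm_num)
  have hρp : ContDiffAt ℝ 2 ρ p := hρ.contDiffAt (hΩ.mem_nhds hp)
  -- contdiff of u at p
  have hrpow : ContDiffAt ℝ 2 (fun t : ℝ => t ^ N) (ρ p + ν) :=
    Real.contDiffAt_rpow_const_of_ne (ne_of_gt (hρν p hp))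
  have hplus : ContDiffAt ℝ 2 (fun y => ρ y + ν) p := hρp.add contDiffAt_const
  have huC : ContDiffAt ℝ 2 (fun x => (ρ x + ν) ^ N) p := by
    have := hrpow.comp p hplus
    exact this
  have hu2 : DifferentiableAt ℝ (fderiv ℝ (fun x => (ρ x + ν) ^ N)) p :=
    (huC.fderiv_right h12).differentiableAt one_ne_zero
  have hρ2 : DifferentiableAt ℝ (fderiv ℝ ρ) p :=
    (hρp.fderiv_right h12).differentiableAt one_ne_zero
  have hev : (fun y => fderiv ℝ (fun x => (ρ x + ν) ^ N) y w) =ᶠ[nhds p]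
      fun y => (N * (ρ y + ν) ^ (N - 1)) * fderiv ℝ ρ y w := by
    filter_upwards [hΩ.mem_nhds hp] with x hx
    have hpow := Real.hasDerivAt_rpow_const (p := N) (Or.inl (ne_of_gt (hρν x hx)))
    have hadd : HasFDerivAt (fun y => ρ y + ν) (fderiv ℝ ρ x) x :=
      ((hρd x hx).hasFDerivAt).add_const ν
    have hcomp : HasFDerivAt (fun y => (ρ y + ν) ^ N)
        ((N * (ρ x + ν) ^ (N - 1)) • fderiv ℝ ρ x) x := by have := hpow.comp_hasFDerivAt x hadd; exact this
    rw [hcomp.fderiv]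
    simp [smul_eq_mul]
  -- derivative of φ at p
  have hcpow := Real.hasDerivAt_rpow_const (p := N - 1) (Or.inl (ne_of_gt (hρν p hp)))
  have haddp : HasFDerivAt (fun y => ρ y + ν) (fderiv ℝ ρ p) p :=
    ((hρd p hp).hasFDerivAt).add_const ν
  have hc : HasFDerivAt (fun y => (ρ y + ν) ^ (N - 1))
      (((N - 1) * (ρ p + ν) ^ (N - 1 - 1)) • fderiv ℝ ρ p) p :=
    by have := hcpow.comp_hasFDerivAt p haddp; exact this
  have hc2 := hc.const_mul N
  have hq := hasFDerivAt_fderiv_clm_apply hρ2 w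
  have hφ := hc2.mul hq
  rw [second_deriv_congr hu2 hev hφ v]
  have hsub : N - 1 - 1 = N - 2 := by ring
  simp only [ContinuousLinearMap.add_apply, ContinuousLinearMap.coe_smul', Pi.smul_apply,
    ContinuousLinearMap.coe_comp', Function.comp_apply, ContinuousLinearMap.apply_apply,
    smul_eq_mul, hsub]
  ring


lemma smul_I_I {m : ℕ} (a : Fin m → ℂ) : Complex.I • Complex.I • a = -a := by
  rw [smul_smul, Complex.I_mul_I, neg_one_smul]

lemma wd_add {m : ℕ} (u : (Fin m → ℂ) → ℝ) (p x y : Fin m → ℂ) :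
    wirtingerDeriv u p (x + y) = wirtingerDeriv u p x + wirtingerDeriv u p y := by
  unfold wirtingerDeriv
  simp only [smul_add, map_add, ContinuousLinearMap.add_apply]
  push_cast
  ring

lemma wd_smulI {m : ℕ} (u : (Fin m → ℂ) → ℝ) (p x : Fin m → ℂ) :
    wirtingerDeriv u p (Complex.I • x) = Complex.I * wirtingerDeriv u p x := by
  unfold wirtingerDeriv
  simp only [smul_I_I, map_neg, ContinuousLinearMap.neg_apply]
  push_cast
  ring_nf
  rw [Complex.I_sq]
  ring

lemma mh_add_left {m : ℕ} (u : (Fin m → ℂ) → ℝ) (p x y b : Fin m → ℂ) :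
    mixedComplexHessian u p (x + y) b
      = mixedComplexHessian u p x b + mixedComplexHessian u p y b := by
  unfold mixedComplexHessian
  simp only [smul_add, map_add, ContinuousLinearMap.add_apply]
  push_cast
  ring

lemma mh_add_right {m : ℕ} (u : (Fin m → ℂ) → ℝ) (p a x y : Fin m → ℂ) :
    mixedComplexHessian u p a (x + y)
      = mixedComplexHessian u p a x + mixedComplexHessian u p a y := by
  unfold mixedComplexHessian
  simp only [smul_add, map_add, ContinuousLinearMap.add_apply]
  push_cast
  ring

lemma mh_smulI_left {m : ℕ} (u : (Fin m → ℂ) → ℝ) (p x b : Fin m → ℂ) :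
    mixedComplexHessian u p (Complex.I • x) b = Complex.I * mixedComplexHessian u p x b := by
  unfold mixedComplexHessian
  simp only [smul_I_I, map_neg, ContinuousLinearMap.neg_apply]
  push_cast
  ring_nf
  rw [Complex.I_sq]
  ring

lemma mh_smulI_right {m : ℕ} (u : (Fin m → ℂ) → ℝ) (p a x : Fin m → ℂ) :
    mixedComplexHessian u p a (Complex.I • x) = -Complex.I * mixedComplexHessian u p a x := by
  unfold mixedComplexHessian
  simp only [smul_I_I, map_neg, ContinuousLinearMap.neg_apply]
  push_cast
  ring_nf
  rw [Complex.I_sq]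
  ring


/-- The sesquilinear "difference" form appearing in `stmt_14`. -/
noncomputable def Gform (n K : ℕ) (N ν : ℝ) (ρ : (Fin (n + 1) → ℂ) → ℝ)
    (f : Fin K → (Fin (n + 1) → ℂ) → ℂ) (p : Fin (n + 1) → ℂ)
    (x y : Fin (n + 1) → ℂ) : ℂ :=
  ((N * ν ^ (N - 2) : ℝ) : ℂ) *
      ((ν : ℂ) * mixedComplexHessian ρ p x y
        + ((N - 1 : ℝ) : ℂ) * wirtingerDeriv ρ p x * conj (wirtingerDeriv ρ p y)) -
    ∑ μ, fderiv ℂ (f μ) p x * conj (fderiv ℂ (f μ) p y)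

/-- Polarization: a sesquilinear form vanishing on the diagonal vanishes. -/
lemma sesq_polar {V : Type*} [AddCommGroup V] [Module ℂ V] (G : V → V → ℂ)
    (h1 : ∀ x y b, G (x + y) b = G x b + G y b)
    (h2 : ∀ b x y, G b (x + y) = G b x + G b y)
    (h3 : ∀ x b, G (Complex.I • x) b = Complex.I * G x b)
    (h4 : ∀ b x, G b (Complex.I • x) = -Complex.I * G b x)
    (hd : ∀ x, G x x = 0) : ∀ x y, G x y = 0 := by
  intro x y
  have e1 : G x y + G y x = 0 := by
    have h := hd (x + y)
    rw [h1, h2, h2, hd x, hd y] at h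
    linear_combination h
  have e2 : G y x = G x y := by
    have h := hd (x + Complex.I • y)
    rw [h1, h2, h2, hd x, h4, h3, h3, h4, hd y] at h
    have h3' : Complex.I * (G y x - G x y) = 0 := by linear_combination h
    rcases mul_eq_zero.mp h3' with h | h
    · exact absurd h Complex.I_ne_zero
    · exact sub_eq_zero.mp h
  have h4' : (2 : ℂ) * G x y = 0 := by linear_combination e1 - e2
  rcases mul_eq_zero.mp h4' with h | h
  · norm_num at h
  · exact h

theorem stmt_14 (n : ℕ) (hn : 1 ≤ n) (K : ℕ) (hK : 1 ≤ K)
    (Ω : Set (Fin (n + 1) → ℂ)) (hΩ : IsOpen Ω)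
    (ν N : ℝ) (hν : 0 < ν) (hN : 0 < N)
    (ρ : (Fin (n + 1) → ℂ) → ℝ) (hρ : ContDiffOn ℝ 2 ρ Ω)
    (hρν : ∀ x ∈ Ω, 0 < ρ x + ν)
    (ψ : (Fin (n + 1) → ℂ) → ℝ) (hψ : ContDiffOn ℝ 2 ψ Ω)
    (hpluri : ∀ x ∈ Ω, ∀ a b : Fin (n + 1) → ℂ, mixedComplexHessian ψ x a b = 0)
    (f : Fin K → (Fin (n + 1) → ℂ) → ℂ)
    (hf : ∀ μ, DifferentiableOn ℂ (f μ) Ω)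
    (heq : ∀ x ∈ Ω, (ρ x + ν) ^ N = ψ x + ∑ μ, Complex.normSq (f μ x)) :
    ∀ p ∈ Ω, ρ p = 0 → ∀ a b : Fin (n + 1) → ℂ,
      ((N * ν ^ (N - 2) : ℝ) : ℂ) *
          ((ν : ℂ) * mixedComplexHessian ρ p a b
            + ((N - 1 : ℝ) : ℂ) * wirtingerDeriv ρ p a * conj (wirtingerDeriv ρ p b)) =
        ∑ μ, fderiv ℂ (f μ) p a * conj (fderiv ℂ (f μ) p b) := by
  intro p hp hρ0 a₀ b₀
  classical
  have h12 : (1 : WithTop ℕ∞) + 1 ≤ 2 := by norm_num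
  have h1le2 : (1 : WithTop ℕ∞) ≤ 2 := by norm_num
  have hmem : Ω ∈ nhds p := hΩ.mem_nhds hp
  have hρp : ContDiffAt ℝ 2 ρ p := hρ.contDiffAt hmem
  have hψp : ContDiffAt ℝ 2 ψ p := hψ.contDiffAt hmem
  -- the diagonal case
  have hdiag : ∀ a : Fin (n + 1) → ℂ,
      ((N * ν ^ (N - 2) : ℝ) : ℂ) *
          ((ν : ℂ) * mixedComplexHessian ρ p a a
            + ((N - 1 : ℝ) : ℂ) * wirtingerDeriv ρ p a * conj (wirtingerDeriv ρ p a)) =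
        ∑ μ, fderiv ℂ (f μ) p a * conj (fderiv ℂ (f μ) p a) := by
    intro a
    set uu : (Fin (n + 1) → ℂ) → ℝ := fun x => (ρ x + ν) ^ N with huu
    set hh : (Fin (n + 1) → ℂ) → ℝ := fun x => uu x - ψ x with hhh
    have huC : ∀ x ∈ Ω, ContDiffAt ℝ 2 uu x := fun x hx => by
      exact (Real.contDiffAt_rpow_const_of_ne (p := N) (ne_of_gt (hρν x hx))).comp x
        ((hρ.contDiffAt (hΩ.mem_nhds hx)).add contDiffAt_const)
    have hψC : ∀ x ∈ Ω, ContDiffAt ℝ 2 ψ x := fun x hx => hψ.contDiffAt (hΩ.mem_nhds hx)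
    have hhC : ∀ x ∈ Ω, ContDiffAt ℝ 2 hh x := fun x hx => (huC x hx).sub (hψC x hx)
    have hu2 : DifferentiableAt ℝ (fderiv ℝ uu) p :=
      ((huC p hp).fderiv_right h12).differentiableAt one_ne_zero
    have hψ2 : DifferentiableAt ℝ (fderiv ℝ ψ) p :=
      (hψp.fderiv_right h12).differentiableAt one_ne_zero
    have hh2 : DifferentiableAt ℝ (fderiv ℝ hh) p :=
      (((hhC p hp).fderiv_right h12)).differentiableAt one_ne_zero
    -- (A) chain rule for uu at p
    have hA : ∀ v w, fderiv ℝ (fderiv ℝ uu) p v w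
        = (N * ((N - 1) * ν ^ (N - 2))) * (fderiv ℝ ρ p v * fderiv ℝ ρ p w)
          + (N * ν ^ (N - 1)) * fderiv ℝ (fderiv ℝ ρ) p v w := by
      intro v w
      have h := rpow_comp_second_deriv hΩ hp hρ (N := N) hρν v w
      rw [hρ0, zero_add] at h
      rw [huu]
      exact h
    -- (B) subtraction
    have hB : ∀ v w, fderiv ℝ (fderiv ℝ hh) p v w
        = fderiv ℝ (fderiv ℝ uu) p v w - fderiv ℝ (fderiv ℝ ψ) p v w := by
      intro v w
      have hev : (fun y => fderiv ℝ hh y w) =ᶠ[nhds p]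
          fun y => fderiv ℝ uu y w - fderiv ℝ ψ y w := by
        filter_upwards [hmem] with x hx
        rw [hhh]
        rw [fderiv_fun_sub ((huC x hx).differentiableAt (by norm_num))
          ((hψC x hx).differentiableAt (by norm_num))]
        simp
      have hφ := (hasFDerivAt_fderiv_clm_apply hu2 w).sub (hasFDerivAt_fderiv_clm_apply hψ2 w)
      rw [second_deriv_congr hh2 hev hφ v]
      simp
    -- (C) restriction to the line through p in direction a
    have hC : ∀ ζ η : ℂ, fderiv ℝ (fderiv ℝ (fun z : ℂ => hh (p + z • a))) 0 ζ η
        = fderiv ℝ (fderiv ℝ hh) p (ζ • a) (η • a) := line_second_deriv (hhC p hp) a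
    -- the line preimage set
    set ℓ : ℂ → (Fin (n + 1) → ℂ) := fun z => p + z • a with hℓ
    have hℓcont : Continuous ℓ := continuous_const.add (continuous_id.smul continuous_const)
    set U : Set ℂ := ℓ ⁻¹' Ω with hU
    have hUo : IsOpen U := hΩ.preimage hℓcont
    have hU0 : (0 : ℂ) ∈ U := by
      simp only [hU, Set.mem_preimage, hℓ]
      simpa using hp
    have hℓd : Differentiable ℂ ℓ := (differentiable_id.smul_const a).const_add p
    have hgdiff : ∀ μ, DifferentiableOn ℂ (fun z : ℂ => f μ (ℓ z)) U := fun μ =>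
      (hf μ).comp hℓd.differentiableOn (fun z hz => hz)
    have hGC : ∀ μ, ∀ z ∈ U, ContDiffAt ℝ 2 (fun z : ℂ => Complex.normSq (f μ (ℓ z))) z :=
      fun μ z hz => contDiff_normSq.contDiffAt.comp z
        (((((hgdiff μ).analyticOnNhd hUo) z hz).contDiffAt).restrict_scalars ℝ)
    -- (D) eventual equality on the line
    have hsum_ev : (fun z : ℂ => hh (ℓ z)) =ᶠ[nhds 0]
        fun z : ℂ => ∑ μ, Complex.normSq (f μ (ℓ z)) := by
      filter_upwards [hUo.mem_nhds hU0] with z hz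
      have := heq (ℓ z) hz
      simp only [hhh, huu]
      rw [this]
      ring
    have hD2eq : fderiv ℝ (fderiv ℝ (fun z : ℂ => hh (ℓ z))) 0
        = fderiv ℝ (fderiv ℝ (fun z : ℂ => ∑ μ, Complex.normSq (f μ (ℓ z)))) 0 :=
      (hsum_ev.fderiv).fderiv_eq
    -- (F) splitting the sum
    have hFk : ∀ v w : ℂ, fderiv ℝ (fderiv ℝ (fun z : ℂ => ∑ μ, Complex.normSq (f μ (ℓ z)))) 0 v w
        = ∑ μ, fderiv ℝ (fderiv ℝ (fun z : ℂ => Complex.normSq (f μ (ℓ z)))) 0 v w := by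
      intro v w
      have hsumC : ContDiffAt ℝ 2 (fun z : ℂ => ∑ μ, Complex.normSq (f μ (ℓ z))) 0 :=
        ContDiffAt.sum (fun μ _ => hGC μ 0 hU0)
      have hs2 : DifferentiableAt ℝ
          (fderiv ℝ (fun z : ℂ => ∑ μ, Complex.normSq (f μ (ℓ z)))) 0 :=
        (hsumC.fderiv_right h12).differentiableAt one_ne_zero
      have hev : (fun y => fderiv ℝ (fun z : ℂ => ∑ μ, Complex.normSq (f μ (ℓ z))) y w)
          =ᶠ[nhds 0] fun y => ∑ μ, fderiv ℝ (fun z : ℂ => Complex.normSq (f μ (ℓ z))) y w := by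
        filter_upwards [hUo.mem_nhds hU0] with z hz
        rw [fderiv_fun_sum (fun μ _ => (hGC μ z hz).differentiableAt (by norm_num))]
        simp
      have hφ := HasFDerivAt.fun_sum (fun (μ : Fin K) (_ : μ ∈ Finset.univ) =>
        hasFDerivAt_fderiv_clm_apply
          (((hGC μ 0 hU0).fderiv_right h12).differentiableAt one_ne_zero) w)
      rw [second_deriv_congr hs2 hev hφ v]
      simp
    -- (E,G) per-μ Laplacian on the line
    have hEμ : ∀ μ, fderiv ℝ (fderiv ℝ (fun z : ℂ => Complex.normSq (f μ (ℓ z)))) 0 1 1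
        + fderiv ℝ (fderiv ℝ (fun z : ℂ => Complex.normSq (f μ (ℓ z)))) 0 Complex.I Complex.I
        = 4 * Complex.normSq (fderiv ℂ (f μ) p a) := by
      intro μ
      have hℓ0 : ℓ 0 = p := by simp [hℓ]
      have hld : HasDerivAt ℓ a 0 := by
        have h1 : HasDerivAt (fun z : ℂ => z • a) ((1 : ℂ) • a) 0 :=
          (hasDerivAt_id (0 : ℂ)).smul_const a
        have h2 := h1.const_add p
        simpa [hℓ] using h2
      have hFμ : HasFDerivAt (f μ) (fderiv ℂ (f μ) p) (ℓ 0) := by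
        rw [hℓ0]
        exact ((hf μ).differentiableAt hmem).hasFDerivAt
      have hgd : HasDerivAt (fun z : ℂ => f μ (ℓ z)) (fderiv ℂ (f μ) p a) 0 :=
        hFμ.comp_hasDerivAt 0 hld
      have hd0 : deriv (fun z : ℂ => f μ (ℓ z)) 0 = fderiv ℂ (f μ) p a := hgd.deriv
      rw [normSq_second_deriv hUo hU0 (hgdiff μ) 1 1,
        normSq_second_deriv hUo hU0 (hgdiff μ) Complex.I Complex.I, hd0]
      simp [Complex.mul_re, Complex.mul_im, Complex.conj_re, Complex.conj_im,
        Complex.I_re, Complex.I_im, Complex.normSq_apply]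
      ring
    -- laplacian of hh along the line
    have hlap : fderiv ℝ (fderiv ℝ hh) p a a
        + fderiv ℝ (fderiv ℝ hh) p (Complex.I • a) (Complex.I • a)
        = ∑ μ, 4 * Complex.normSq (fderiv ℂ (f μ) p a) := by
      have e1 : fderiv ℝ (fderiv ℝ hh) p a a
          = fderiv ℝ (fderiv ℝ (fun z : ℂ => hh (p + z • a))) 0 1 1 := by
        rw [hC 1 1, one_smul]
      have e2 : fderiv ℝ (fderiv ℝ hh) p (Complex.I • a) (Complex.I • a)
          = fderiv ℝ (fderiv ℝ (fun z : ℂ => hh (p + z • a))) 0 Complex.I Complex.I :=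
        (hC Complex.I Complex.I).symm
      rw [e1, e2]
      have eℓ : (fun z : ℂ => hh (p + z • a)) = fun z : ℂ => hh (ℓ z) := rfl
      rw [eℓ, hD2eq, hFk 1 1, hFk Complex.I Complex.I, ← Finset.sum_add_distrib]
      exact Finset.sum_congr rfl fun μ _ => hEμ μ
    -- symmetry facts
    have hsymρ : fderiv ℝ (fderiv ℝ ρ) p a (Complex.I • a)
        = fderiv ℝ (fderiv ℝ ρ) p (Complex.I • a) a :=
      (hρp.isSymmSndFDerivAt (by simp)) a (Complex.I • a)
    have hsymψ : fderiv ℝ (fderiv ℝ ψ) p a (Complex.I • a)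
        = fderiv ℝ (fderiv ℝ ψ) p (Complex.I • a) a :=
      (hψp.isSymmSndFDerivAt (by simp)) a (Complex.I • a)
    -- pluriharmonicity gives the real identity
    have hψ0 : fderiv ℝ (fderiv ℝ ψ) p a a
        + fderiv ℝ (fderiv ℝ ψ) p (Complex.I • a) (Complex.I • a) = 0 := by
      have h0 := hpluri p hp a a
      unfold mixedComplexHessian at h0
      rw [hsymψ] at h0
      have h0' : ((fderiv ℝ (fderiv ℝ ψ) p a a
          + fderiv ℝ (fderiv ℝ ψ) p (Complex.I • a) (Complex.I • a) : ℝ) : ℂ) = 0 := by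
        push_cast
        linear_combination (norm := (push_cast; ring_nf)) 4 * h0
      exact_mod_cast h0'
    -- rpow arithmetic
    have hpow : ν ^ (N - 1) = ν ^ (N - 2) * ν := by
      rw [show N - 1 = N - 2 + 1 by ring, Real.rpow_add hν, Real.rpow_one]
    -- final assembly
    have hmain : ((N * ν ^ (N - 2) : ℝ) : ℂ) *
        ((ν : ℂ) * mixedComplexHessian ρ p a a
          + ((N - 1 : ℝ) : ℂ) * wirtingerDeriv ρ p a * conj (wirtingerDeriv ρ p a))
        = (1 / 4 : ℂ) * (((fderiv ℝ (fderiv ℝ hh) p a a : ℝ) : ℂ)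
            + ((fderiv ℝ (fderiv ℝ hh) p (Complex.I • a) (Complex.I • a) : ℝ) : ℂ)) := by
      unfold mixedComplexHessian wirtingerDeriv
      rw [hB a a, hB (Complex.I • a) (Complex.I • a), hA a a,
        hA (Complex.I • a) (Complex.I • a), hsymρ, hpow]
      have hψc : ((fderiv ℝ (fderiv ℝ ψ) p (Complex.I • a) (Complex.I • a) : ℝ) : ℂ)
          = -((fderiv ℝ (fderiv ℝ ψ) p a a : ℝ) : ℂ) := by
        have hr : fderiv ℝ (fderiv ℝ ψ) p (Complex.I • a) (Complex.I • a)
            = -(fderiv ℝ (fderiv ℝ ψ) p a a) := by linarith [hψ0]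
        exact_mod_cast hr
      simp only [map_mul, map_sub, map_div₀, map_one, map_ofNat, Complex.conj_I,
        Complex.conj_ofReal]
      push_cast
      rw [hψc]
      ring_nf
      simp only [Complex.I_sq]
      ring_nf
    rw [hmain]
    have : ∑ μ, fderiv ℂ (f μ) p a * conj (fderiv ℂ (f μ) p a)
        = ∑ μ, ((Complex.normSq (fderiv ℂ (f μ) p a) : ℝ) : ℂ) :=
      Finset.sum_congr rfl fun μ _ => Complex.mul_conj _
    have hcast : ((fderiv ℝ (fderiv ℝ hh) p a a : ℝ) : ℂ)
        + ((fderiv ℝ (fderiv ℝ hh) p (Complex.I • a) (Complex.I • a) : ℝ) : ℂ)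
        = ((∑ μ, 4 * Complex.normSq (fderiv ℂ (f μ) p a) : ℝ) : ℂ) := by
      rw [← hlap]; push_cast; ring
    rw [this, hcast]
    push_cast
    rw [Finset.mul_sum]
    exact Finset.sum_congr rfl fun μ _ => by ring
  -- polarization
  have hGa1 : ∀ x y b : Fin (n + 1) → ℂ,
      Gform n K N ν ρ f p (x + y) b = Gform n K N ν ρ f p x b + Gform n K N ν ρ f p y b := by
    intro x y b
    unfold Gform
    simp only [mh_add_left, wd_add, map_add, add_mul, ContinuousLinearMap.add_apply]
    rw [Finset.sum_add_distrib]
    ring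
  have hGa2 : ∀ b x y : Fin (n + 1) → ℂ,
      Gform n K N ν ρ f p b (x + y) = Gform n K N ν ρ f p b x + Gform n K N ν ρ f p b y := by
    intro b x y
    unfold Gform
    simp only [mh_add_right, wd_add, map_add, mul_add, ContinuousLinearMap.add_apply]
    rw [Finset.sum_add_distrib]
    ring
  have hGi1 : ∀ x b : Fin (n + 1) → ℂ,
      Gform n K N ν ρ f p (Complex.I • x) b = Complex.I * Gform n K N ν ρ f p x b := by
    intro x b
    unfold Gform
    have hs : ∑ μ, fderiv ℂ (f μ) p (Complex.I • x) * conj (fderiv ℂ (f μ) p b)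
        = Complex.I * ∑ μ, fderiv ℂ (f μ) p x * conj (fderiv ℂ (f μ) p b) := by
      rw [Finset.mul_sum]
      refine Finset.sum_congr rfl fun μ _ => ?_
      rw [ContinuousLinearMap.map_smul, smul_eq_mul]
      ring
    rw [hs, mh_smulI_left, wd_smulI]
    ring
  have hGi2 : ∀ b x : Fin (n + 1) → ℂ,
      Gform n K N ν ρ f p b (Complex.I • x) = -Complex.I * Gform n K N ν ρ f p b x := by
    intro b x
    unfold Gform
    have hs : ∑ μ, fderiv ℂ (f μ) p b * conj (fderiv ℂ (f μ) p (Complex.I • x))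
        = -Complex.I * ∑ μ, fderiv ℂ (f μ) p b * conj (fderiv ℂ (f μ) p x) := by
      rw [Finset.mul_sum]
      refine Finset.sum_congr rfl fun μ _ => ?_
      rw [ContinuousLinearMap.map_smul, smul_eq_mul, map_mul, Complex.conj_I]
      ring
    rw [hs, mh_smulI_right]
    have hw : conj (wirtingerDeriv ρ p (Complex.I • x))
        = -Complex.I * conj (wirtingerDeriv ρ p x) := by
      rw [wd_smulI, map_mul, Complex.conj_I]
    rw [hw]
    ring
  have hGd : ∀ x, Gform n K N ν ρ f p x x = 0 := by
    intro x
    unfold Gform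
    exact sub_eq_zero.mpr (hdiag x)
  have hz := sesq_polar (Gform n K N ν ρ f p) hGa1 hGa2 hGi1 hGi2 hGd a₀ b₀
  unfold Gform at hz
  exact sub_eq_zero.mp hz
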